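/- Let H be a Hilbert space of functions on Ω with nonsingular kernel, let ψ : D_ψ → ℂ with Ω∖D_ψ containing at most m−1 points (m ≥ 1), and suppose ψ is an m-pseudomultiplier but not an (m−1)-pseudomultiplier. Then there is a unique closed subspace E of codimension m in H with ψE ⊆ H|D_ψ. -/

import Mathlib

/-- If `S ≤ T` and the quotients by `S` and `T` have the same finite dimension, then `S = T`. -/
lemma aux_eq_of_le_finrank {H : Type*} [AddCommGroup H] [Module ℂ H]
    {S T : Submodule ℂ H} (hle : S ≤ T) [FiniteDimensional ℂ (H ⧸ S)]
    (hfr : Module.finrank ℂ (H ⧸ S) = Module.finrank ℂ (H ⧸ T)) : S = T := by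
  have e := Submodule.quotientQuotientEquivQuotient S T hle
  have h1 : Module.finrank ℂ ((H ⧸ S) ⧸ T.map S.mkQ) = Module.finrank ℂ (H ⧸ T) :=
    e.finrank_eq
  have h2 := Submodule.finrank_quotient_add_finrank (T.map S.mkQ)
  have h3 : Module.finrank ℂ (T.map S.mkQ) = 0 := by omega
  have h4 : T.map S.mkQ = ⊥ := Submodule.finrank_eq_zero.mp h3
  have h5 : T ≤ S := by
    rw [← Submodule.ker_mkQ S]
    intro x hx
    have : S.mkQ x ∈ T.map S.mkQ := Submodule.mem_map_of_mem hx
    rw [h4] at this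
    simpa using this
  exact le_antisymm hle h5

/-- (Note 3.) If `ψ`, defined off a set of at most `m−1` points
(`m ≥ 1`), is an `m`-pseudomultiplier but not an `(m−1)`-pseudomultiplier of a Hilbert
function space `H` with nonsingular kernel, then there is a *unique* closed subspace
`E ⊆ H` of codimension `m` with `ψE ⊆ H|D_ψ`. -/
theorem stmt13 {H Ω : Type*} [NormedAddCommGroup H] [InnerProductSpace ℂ H]
    [CompleteSpace H]
    (ev : H →ₗ[ℂ] (Ω → ℂ)) (hinj : Function.Injective ev)
    (kf : Ω → H)
    (hrep : ∀ (f : H) (l : Ω), (inner ℂ (kf l) f : ℂ) = ev f l)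
    (hns : LinearIndependent ℂ kf)
    (m : ℕ) (hm : 1 ≤ m)
    (D : Set Ω) (ψ : Ω → ℂ)
    (hD : ∀ s : Finset Ω, (↑s ⊆ Dᶜ) → s.card ≤ m - 1)
    (hmps : ∃ E : Submodule ℂ H, IsClosed (E : Set H) ∧
      FiniteDimensional ℂ (H ⧸ E) ∧ Module.finrank ℂ (H ⧸ E) = m ∧
      ∀ h ∈ E, ∃ g : H, ∀ l ∈ D, ev g l = ψ l * ev h l)
    (hnot : ¬ ∃ E : Submodule ℂ H, IsClosed (E : Set H) ∧
      FiniteDimensional ℂ (H ⧸ E) ∧ Module.finrank ℂ (H ⧸ E) = m - 1 ∧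
      ∀ h ∈ E, ∃ g : H, ∀ l ∈ D, ev g l = ψ l * ev h l) :
    ∃! E : Submodule ℂ H, IsClosed (E : Set H) ∧
      FiniteDimensional ℂ (H ⧸ E) ∧ Module.finrank ℂ (H ⧸ E) = m ∧
      ∀ h ∈ E, ∃ g : H, ∀ l ∈ D, ev g l = ψ l * ev h l := by
  obtain ⟨E, hEc, hEfd, hEfr, hEprop⟩ := hmps
  refine ⟨E, ⟨hEc, hEfd, hEfr, hEprop⟩, ?_⟩
  rintro E' ⟨hE'c, hE'fd, hE'fr, hE'prop⟩
  by_contra hne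
  -- E' is not contained in E, else they would be equal
  have hnle : ¬ E' ≤ E := by
    intro hle
    exact hne (aux_eq_of_le_finrank hle (by rw [hE'fr, hEfr]))
  obtain ⟨v, hvE', hvE⟩ : ∃ v, v ∈ E' ∧ v ∉ E := by
    by_contra hc
    push_neg at hc
    exact hnle hc
  -- construct F = E ⊔ span {v}, of codimension m - 1
  set F : Submodule ℂ H := E ⊔ Submodule.span ℂ {v} with hF
  have hEF : E ≤ F := le_sup_left
  have hx : E.mkQ v ≠ 0 := by
    simp only [Submodule.mkQ_apply, ne_eq, Submodule.Quotient.mk_eq_zero]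
    exact hvE
  have hmap : F.map E.mkQ = Submodule.span ℂ {E.mkQ v} := by
    rw [hF, Submodule.map_sup, Submodule.mkQ_map_self, bot_sup_eq, Submodule.map_span,
      Set.image_singleton]
  have hL1 : Module.finrank ℂ (F.map E.mkQ) = 1 := by
    rw [hmap]; exact finrank_span_singleton hx
  have e := Submodule.quotientQuotientEquivQuotient E F hEF
  have hfdQ : FiniteDimensional ℂ ((H ⧸ E) ⧸ F.map E.mkQ) := inferInstance
  have hFfd : FiniteDimensional ℂ (H ⧸ F) := Module.Finite.equiv e
  have hq := Submodule.finrank_quotient_add_finrank (F.map E.mkQ)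
  have hFfr : Module.finrank ℂ (H ⧸ F) = m - 1 := by
    have := e.finrank_eq
    omega
  -- F is closed
  obtain ⟨P, hP⟩ := Submodule.ClosedComplemented.of_quotient_finiteDimensional hEc
  set Q : H →L[ℂ] H := ContinuousLinearMap.id ℂ H - E.subtypeL.comp P with hQ
  have hQE : ∀ x ∈ E, Q x = 0 := by
    intro x hxE
    have := hP ⟨x, hxE⟩
    simp only [hQ, ContinuousLinearMap.sub_apply, ContinuousLinearMap.id_apply,
      ContinuousLinearMap.comp_apply, Submodule.subtypeL_apply]
    rw [this]
    simp
  have hFclosed : IsClosed (F : Set H) := by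
    have hset : (F : Set H) = Q ⁻¹' (Submodule.span ℂ {Q v} : Set H) := by
      ext x
      simp only [Set.mem_preimage, SetLike.mem_coe]
      constructor
      · intro hxF
        obtain ⟨a, ha, b, hb, rfl⟩ := Submodule.mem_sup.mp hxF
        obtain ⟨c, rfl⟩ := Submodule.mem_span_singleton.mp hb
        rw [map_add, hQE a ha, zero_add, map_smul]
        exact Submodule.smul_mem _ c (Submodule.mem_span_singleton_self _)
      · intro hxQ
        obtain ⟨c, hc⟩ := Submodule.mem_span_singleton.mp hxQ
        have h0 : Q (x - c • v) = 0 := by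
          rw [map_sub, map_smul, hc, sub_self]
        have hxc : x - c • v ∈ E := by
          have h0' : (x - c • v) - ↑(P (x - c • v)) = 0 := by
            simpa [hQ, ContinuousLinearMap.sub_apply] using h0
          have : x - c • v = ↑(P (x - c • v)) := sub_eq_zero.mp h0'
          rw [this]
          exact (P (x - c • v)).2
        have : x = (x - c • v) + c • v := by abel
        rw [this]
        exact Submodule.add_mem _ (hEF hxc)
          (Submodule.mem_sup_right (Submodule.smul_mem _ c (Submodule.mem_span_singleton_self _)))
    rw [hset]
    exact (Submodule.closed_of_finiteDimensional _).preimage Q.continuous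
  -- F has the pseudomultiplier property
  have hFprop : ∀ h ∈ F, ∃ g : H, ∀ l ∈ D, ev g l = ψ l * ev h l := by
    intro h hhF
    obtain ⟨a, ha, b, hb, rfl⟩ := Submodule.mem_sup.mp hhF
    have hbE' : b ∈ E' := by
      obtain ⟨c, rfl⟩ := Submodule.mem_span_singleton.mp hb
      exact Submodule.smul_mem _ c hvE'
    obtain ⟨g₁, hg₁⟩ := hEprop a ha
    obtain ⟨g₂, hg₂⟩ := hE'prop b hbE'
    refine ⟨g₁ + g₂, fun l hl => ?_⟩
    rw [map_add, map_add]
    simp only [Pi.add_apply]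
    rw [hg₁ l hl, hg₂ l hl]
    ring
  exact hnot ⟨F, hFclosed, hFfd, hFfr, hFprop⟩
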